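/- arXiv:2406.01268 — 4 statements merged into one kernel-verified Lean document; each statement's English description precedes it below -/
import Mathlib

section
/- Let $\mathcal{M} \subset \mathbb{R}^p$ be a set, $x \in \mathcal{M}$, and let $\varphi_x : U_x \to T$ be the orthogonal projection (minus $x$) onto a $d$-dimensional subspace $T$ through $x$, where $U_x = B^p(x, K^{-1}) \cap \mathcal{M}$. Suppose $\varphi_x$ is invertible on its image with inverse $\varphi_x^{-1}$ twice differentiable, $\varphi_x^{-1}(0) = x$, $\nabla\varphi_x^{-1}(0)$ the inclusion of $T$, and $\|\nabla^2 \varphi_x^{-1}\| \leq K$. Then for every $z \in \bar{B}^p(x, \sqrt{3}/(2K)) \cap \mathcal{M}$, the distance from $z$ to its projection satisfies $\|z - \pi_T(z)\| \leq K \|z - x\|^2$, and consequently $\|\varphi_x(z)\|^2 \geq \|x - z\|^2 - K^2\|x-z\|^4 \geq \frac{1}{4}\|x-z\|^2$. -/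
open Metric

set_option maxHeartbeats 1000000 in
/-- For a chart `φ_x = π_T - x` of a submanifold `M` whose inverse `ψ` is twice
differentiable with `ψ(0) = x`, `∇ψ(0)` the inclusion of `T`, and `‖∇²ψ‖ ≤ K`:
every `z ∈ B̄(x, √3/(2K)) ∩ M` satisfies `‖z - π_T(z)‖ ≤ K‖z-x‖²`, and consequently
`‖φ_x(z)‖² ≥ ‖x-z‖² - K²‖x-z‖⁴ ≥ ¼‖x-z‖²`. -/
theorem stmt_5 (p : ℕ) (K : ℝ) (hK : 1 < K)
    (M : Set (EuclideanSpace ℝ (Fin p))) (x : EuclideanSpace ℝ (Fin p)) (hx : x ∈ M)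
    (T : Submodule ℝ (EuclideanSpace ℝ (Fin p)))
    (ψ : T → EuclideanSpace ℝ (Fin p))
    (hψ : ContDiff ℝ 2 ψ) (hψ0 : ψ 0 = x)
    (hψd : fderiv ℝ ψ 0 = T.subtypeL)
    (hψ2 : ∀ w : T, @norm _ ContinuousLinearMap.hasOpNorm (fderiv ℝ (fderiv ℝ ψ) w) ≤ K)
    (hinv : ∀ z ∈ Metric.ball x K⁻¹ ∩ M, ψ (Submodule.orthogonalProjectionOnto T (z - x)) = z) :
    ∀ z ∈ Metric.closedBall x (Real.sqrt 3 / (2 * K)) ∩ M,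
      ‖z - (x + (Submodule.orthogonalProjectionOnto T (z - x) : EuclideanSpace ℝ (Fin p)))‖
          ≤ K * ‖z - x‖ ^ 2 ∧
      ‖x - z‖ ^ 2 - K ^ 2 * ‖x - z‖ ^ 4
          ≤ ‖(Submodule.orthogonalProjectionOnto T (z - x) : EuclideanSpace ℝ (Fin p))‖ ^ 2 ∧
      (1/4) * ‖x - z‖ ^ 2 ≤ ‖x - z‖ ^ 2 - K ^ 2 * ‖x - z‖ ^ 4 := by
  intro z hz
  obtain ⟨hz1, hz2⟩ := hz
  have hK0 : (0:ℝ) < K := lt_trans one_pos hK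
  rw [Metric.mem_closedBall, dist_eq_norm] at hz1
  have hs3 : Real.sqrt 3 < 2 := by
    nlinarith [Real.sq_sqrt (by norm_num : (3:ℝ) ≥ 0), Real.sqrt_nonneg 3]
  -- z is in the small ball
  have hzball : z ∈ Metric.ball x K⁻¹ ∩ M := by
    refine ⟨?_, hz2⟩
    rw [Metric.mem_ball, dist_eq_norm]
    calc ‖z - x‖ ≤ Real.sqrt 3 / (2 * K) := hz1
      _ < K⁻¹ := by
        rw [inv_eq_one_div, div_lt_div_iff₀ (by positivity) hK0]
        nlinarith
  set w : T := Submodule.orthogonalProjectionOnto T (z - x) with hw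
  have hψw : ψ w = z := hinv z hzball
  -- fderiv ψ is Lipschitz with constant K
  have hd1 : ContDiff ℝ 1 (fderiv ℝ ψ) := hψ.fderiv_right (by norm_num)
  have hdiff : Differentiable ℝ (fderiv ℝ ψ) := hd1.differentiable one_ne_zero
  have hLip : ∀ a : T, ‖fderiv ℝ ψ a - fderiv ℝ ψ 0‖ ≤ K * ‖a‖ := by
    intro a
    have := Convex.norm_image_sub_le_of_norm_fderiv_le
      (f := fderiv ℝ ψ) (s := Set.univ) (C := K)
      (fun b _ => (hdiff b)) (fun b _ => hψ2 b) convex_univ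
      (Set.mem_univ 0) (Set.mem_univ a)
    simpa using this
  -- Taylor estimate on the ball of radius ‖w‖
  have hbound : ∀ b ∈ Metric.closedBall (0:T) ‖w‖,
      ‖fderiv ℝ ψ b - fderiv ℝ ψ 0‖ ≤ K * ‖w‖ := by
    intro b hb
    rw [Metric.mem_closedBall, dist_zero_right] at hb
    exact le_trans (hLip b) (by nlinarith [norm_nonneg b])
  have hmem0 : (0:T) ∈ Metric.closedBall (0:T) ‖w‖ :=
    Metric.mem_closedBall_self (norm_nonneg _)
  have hmemw : w ∈ Metric.closedBall (0:T) ‖w‖ := by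
    rw [Metric.mem_closedBall, dist_zero_right]
  have hTaylor : ‖ψ w - ψ 0 - (fderiv ℝ ψ 0) (w - 0)‖ ≤ (K * ‖w‖) * ‖w - 0‖ :=
    Convex.norm_image_sub_le_of_norm_hasFDerivWithin_le'
      (f' := fderiv ℝ ψ)
      (fun b _ => ((hψ.differentiable (by norm_num)) b).hasFDerivAt.hasFDerivWithinAt)
      hbound (convex_closedBall _ _) hmem0 hmemw
  have hkey : ‖(z - x) - (w : EuclideanSpace ℝ (Fin p))‖ ≤ K * ‖w‖ ^ 2 := by
    have hid : (fderiv ℝ ψ 0) (w - 0) = (w : EuclideanSpace ℝ (Fin p)) := by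
      rw [hψd]; simp
    rw [hid, hψw, hψ0, sub_zero] at hTaylor
    calc ‖(z - x) - (w : EuclideanSpace ℝ (Fin p))‖
        = ‖z - x - (w : EuclideanSpace ℝ (Fin p))‖ := rfl
      _ ≤ (K * ‖w‖) * ‖w‖ := hTaylor
      _ = K * ‖w‖ ^ 2 := by ring
  -- Pythagoras
  have hpyth : ‖z - x‖ ^ 2 = ‖(w : EuclideanSpace ℝ (Fin p))‖ ^ 2
      + ‖(z - x) - (w : EuclideanSpace ℝ (Fin p))‖ ^ 2 := by
    have horth : (inner ℝ (w : EuclideanSpace ℝ (Fin p))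
        ((z - x) - (w : EuclideanSpace ℝ (Fin p))) : ℝ) = 0 :=
      Submodule.inner_right_of_mem_orthogonal w.2
        (T.sub_starProjection_mem_orthogonal (z - x))
    have h := norm_add_sq_real (w : EuclideanSpace ℝ (Fin p))
      ((z - x) - (w : EuclideanSpace ℝ (Fin p)))
    rw [horth] at h
    have he : (w : EuclideanSpace ℝ (Fin p)) + ((z - x) - (w : EuclideanSpace ℝ (Fin p)))
        = z - x := by abel
    rw [he] at h
    linarith
  have hnw : ‖(w : EuclideanSpace ℝ (Fin p))‖ = ‖w‖ := rfl
  have hw2 : ‖w‖ ^ 2 ≤ ‖z - x‖ ^ 2 := by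
    rw [← hnw] at *
    nlinarith [sq_nonneg ‖(z - x) - (w : EuclideanSpace ℝ (Fin p))‖]
  have hkey2 : ‖(z - x) - (w : EuclideanSpace ℝ (Fin p))‖ ≤ K * ‖z - x‖ ^ 2 := by
    refine hkey.trans ?_
    nlinarith
  have hxz : ‖x - z‖ = ‖z - x‖ := norm_sub_rev x z
  refine ⟨?_, ?_, ?_⟩
  · have he2 : z - (x + (w : EuclideanSpace ℝ (Fin p))) = (z - x) - w := by abel
    rw [he2]; exact hkey2
  · rw [hxz, hnw]
    rw [hnw] at hpyth
    have h4 : ‖(z - x) - (w : EuclideanSpace ℝ (Fin p))‖ ^ 2 ≤ (K * ‖z - x‖ ^ 2) ^ 2 := by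
      nlinarith [norm_nonneg ((z - x) - (w : EuclideanSpace ℝ (Fin p)))]
    nlinarith
  · rw [hxz]
    have h5 : K * ‖z - x‖ ≤ Real.sqrt 3 / 2 := by
      calc K * ‖z - x‖ ≤ K * (Real.sqrt 3 / (2 * K)) := by nlinarith [norm_nonneg (z - x)]
        _ = Real.sqrt 3 / 2 := by field_simp
    have h6 : (K * ‖z - x‖) ^ 2 ≤ 3 / 4 := by
      nlinarith [Real.sq_sqrt (by norm_num : (3:ℝ) ≥ 0), Real.sqrt_nonneg 3,
        mul_nonneg hK0.le (norm_nonneg (z - x))]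
    nlinarith [norm_nonneg (z - x)]
end

section
/- Let $X : B \to \mathbb{R}^p$ (with $B \subset \mathbb{R}^d$ convex) be differentiable with $\|\nabla X\| \leq K_X$ on $B$, and for $\xi > 0$ define $L(u) = \frac{X(u)}{\xi}$ if $\|X(u)\| < \xi$ and $L(u) = \frac{X(u)}{\|X(u)\|}$ if $\|X(u)\| \geq \xi$. Fix $s \in (0,1]$ and write $\delta_u = \|X(u)\|$. Then for all $u, v \in B$, $\|L(u) - L(v)\| \leq 8 K_X \min(\delta_u, \delta_v)^{-(1-s)} \|u - v\|^{1-s}$, where we interpret the right-hand side as $+\infty$ if $\min(\delta_u,\delta_v) = 0$. -/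
lemma aux_ordered {E : Type*} [NormedAddCommGroup E] [NormedSpace ℝ E] (ξ : ℝ) (hξ : 0 < ξ)
    (x y : E) (hab : max ξ ‖x‖ ≤ max ξ ‖y‖) :
    ‖(max ξ ‖x‖)⁻¹ • x - (max ξ ‖y‖)⁻¹ • y‖ ≤ 2 * ‖x - y‖ / max ξ ‖x‖ := by
  set a := max ξ ‖x‖ with ha_def
  set b := max ξ ‖y‖ with hb_def
  have ha : 0 < a := lt_of_lt_of_le hξ (le_max_left _ _)
  have hb : 0 < b := lt_of_lt_of_le hξ (le_max_left _ _)
  have hyb : ‖y‖ ≤ b := le_max_right _ _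
  have hba : b - a ≤ ‖x - y‖ := by
    have h1 : |max ξ ‖y‖ - max ξ ‖x‖| ≤ |‖y‖ - ‖x‖| := by
      rw [max_comm ξ ‖y‖, max_comm ξ ‖x‖]; exact abs_max_sub_max_le_abs _ _ _
    have h2 : |‖y‖ - ‖x‖| ≤ ‖y - x‖ := abs_norm_sub_norm_le _ _
    have h3 : ‖y - x‖ = ‖x - y‖ := norm_sub_rev _ _
    calc b - a ≤ |b - a| := le_abs_self _
      _ ≤ |‖y‖ - ‖x‖| := h1
      _ ≤ ‖x - y‖ := by rw [← h3]; exact h2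
  have step : ‖a⁻¹ • x - b⁻¹ • y‖ ≤ ‖a⁻¹ • (x - y)‖ + ‖(a⁻¹ - b⁻¹) • y‖ := by
    have : a⁻¹ • x - b⁻¹ • y = a⁻¹ • (x - y) + (a⁻¹ - b⁻¹) • y := by
      rw [smul_sub, sub_smul]; abel
    rw [this]; exact norm_add_le _ _
  have h1 : ‖a⁻¹ • (x - y)‖ = a⁻¹ * ‖x - y‖ := by
    rw [norm_smul, Real.norm_eq_abs, abs_of_pos (inv_pos.mpr ha)]
  have hinv : b⁻¹ ≤ a⁻¹ := by gcongr
  have h2 : ‖(a⁻¹ - b⁻¹) • y‖ ≤ a⁻¹ * ‖x - y‖ := by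
    rw [norm_smul, Real.norm_eq_abs, abs_of_nonneg (by linarith)]
    have key : (a⁻¹ - b⁻¹) * ‖y‖ ≤ (a⁻¹ - b⁻¹) * b := by
      apply mul_le_mul_of_nonneg_left hyb (by linarith)
    have key2 : (a⁻¹ - b⁻¹) * b ≤ a⁻¹ * ‖x - y‖ := by
      rw [sub_mul, inv_mul_cancel₀ (ne_of_gt hb)]
      have hmul : a⁻¹ * (b - a) ≤ a⁻¹ * ‖x - y‖ :=
        mul_le_mul_of_nonneg_left hba (le_of_lt (inv_pos.mpr ha))
      have hca : a⁻¹ * a = 1 := inv_mul_cancel₀ (ne_of_gt ha)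
      nlinarith
    linarith
  calc ‖a⁻¹ • x - b⁻¹ • y‖ ≤ a⁻¹ * ‖x - y‖ + a⁻¹ * ‖x - y‖ := by
        rw [← h1]; exact le_trans step (by rw [h1]; linarith [h2])
    _ = 2 * ‖x - y‖ / a := by ring


/-- Hölder regularity of the truncated normalization `L` of a vector field `X` with
`‖∇X‖ ≤ K_X` on a convex set `B`: for `s ∈ (0,1]` and `u, v ∈ B` with
`min(‖X u‖, ‖X v‖) > 0`,
`‖L u - L v‖ ≤ 8 K_X min(‖X u‖,‖X v‖)^{-(1-s)} ‖u-v‖^{1-s}`. -/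
theorem stmt_9 (d p : ℕ) (KX ξ s : ℝ) (hKX : 1 ≤ KX) (hξ : 0 < ξ)
    (hs : 0 < s) (hs1 : s ≤ 1)
    (B : Set (EuclideanSpace ℝ (Fin d))) (hB : Convex ℝ B)
    (X : EuclideanSpace ℝ (Fin d) → EuclideanSpace ℝ (Fin p))
    (hX : DifferentiableOn ℝ X B)
    (hX' : ∀ u ∈ B, ‖fderivWithin ℝ X B u‖ ≤ KX)
    (L : EuclideanSpace ℝ (Fin d) → EuclideanSpace ℝ (Fin p))
    (hL : ∀ u, L u = if ‖X u‖ < ξ then ξ⁻¹ • X u else ‖X u‖⁻¹ • X u) :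
    ∀ u ∈ B, ∀ v ∈ B, 0 < min ‖X u‖ ‖X v‖ →
      ‖L u - L v‖ ≤ 8 * KX * (min ‖X u‖ ‖X v‖) ^ (-(1 - s)) * ‖u - v‖ ^ (1 - s) := by
  intro u hu v hv hm
  -- rewrite L uniformly
  have hL' : ∀ w, L w = (max ξ ‖X w‖)⁻¹ • X w := by
    intro w
    rw [hL w]
    split_ifs with h
    · rw [max_eq_left h.le]
    · rw [max_eq_right (le_of_not_gt h)]
  have hKX0 : 0 < KX := lt_of_lt_of_le one_pos hKX
  set m := min ‖X u‖ ‖X v‖ with hm_def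
  set c := ‖u - v‖ with hc_def
  have hc0 : 0 ≤ c := norm_nonneg _
  -- trivial bound ‖L u - L v‖ ≤ 2
  have hnorm1 : ∀ w, ‖L w‖ ≤ 1 := by
    intro w
    rw [hL' w, norm_smul, Real.norm_eq_abs,
      abs_of_pos (inv_pos.mpr (lt_of_lt_of_le hξ (le_max_left _ _)))]
    rw [inv_mul_le_iff₀ (lt_of_lt_of_le hξ (le_max_left _ _)), mul_one]
    exact le_max_right _ _
  have htriv : ‖L u - L v‖ ≤ 2 := by
    calc ‖L u - L v‖ ≤ ‖L u‖ + ‖L v‖ := norm_sub_le _ _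
      _ ≤ 2 := by linarith [hnorm1 u, hnorm1 v]
  -- Lipschitz-type bound
  have hXlip : ‖X u - X v‖ ≤ KX * c := by
    exact hB.norm_image_sub_le_of_norm_fderivWithin_le hX hX' hv hu
  have hma : m ≤ max ξ ‖X u‖ := le_trans (min_le_left _ _) (le_max_right _ _)
  have hmb : m ≤ max ξ ‖X v‖ := le_trans (min_le_right _ _) (le_max_right _ _)
  have hlip : ‖L u - L v‖ ≤ 2 * KX * c / m := by
    have key : ‖L u - L v‖ ≤ 2 * ‖X u - X v‖ / m := by
      rcases le_total (max ξ ‖X u‖) (max ξ ‖X v‖) with h | h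
      · calc ‖L u - L v‖ = ‖(max ξ ‖X u‖)⁻¹ • X u - (max ξ ‖X v‖)⁻¹ • X v‖ := by
              rw [hL' u, hL' v]
          _ ≤ 2 * ‖X u - X v‖ / max ξ ‖X u‖ := aux_ordered ξ hξ _ _ h
          _ ≤ 2 * ‖X u - X v‖ / m := by gcongr
      · calc ‖L u - L v‖ = ‖(max ξ ‖X v‖)⁻¹ • X v - (max ξ ‖X u‖)⁻¹ • X u‖ := by
              rw [hL' u, hL' v, norm_sub_rev]
          _ ≤ 2 * ‖X v - X u‖ / max ξ ‖X v‖ := aux_ordered ξ hξ _ _ h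
          _ ≤ 2 * ‖X u - X v‖ / m := by rw [norm_sub_rev]; gcongr
    calc ‖L u - L v‖ ≤ 2 * ‖X u - X v‖ / m := key
      _ ≤ 2 * (KX * c) / m := by gcongr
      _ = 2 * KX * c / m := by ring
  -- rpow facts
  have hrm : (0:ℝ) < m ^ (-(1-s)) := Real.rpow_pos_of_pos hm _
  have hrc : (0:ℝ) ≤ c ^ (1-s) := Real.rpow_nonneg hc0 _
  rcases le_or_gt m (4 * KX * c) with hcase | hcase
  · -- large distance case: use trivial bound
    have h2 : (2:ℝ) = 2 * m ^ (-(1-s)) * m ^ (1-s) := by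
      have h0 : m ^ (-(1-s)) * m ^ (1-s) = 1 := by
        rw [← Real.rpow_add hm]
        norm_num
      rw [mul_assoc, h0, mul_one]
    have hmc : m ^ (1-s) ≤ (4*KX) ^ (1-s) * c ^ (1-s) := by
      rw [← Real.mul_rpow (by positivity) hc0]
      exact Real.rpow_le_rpow hm.le hcase (by linarith : (0:ℝ) ≤ 1 - s)
    have h4 : (4*KX) ^ (1-s) ≤ 4 * KX := by
      calc (4*KX) ^ (1-s) ≤ (4*KX) ^ (1:ℝ) :=
            Real.rpow_le_rpow_of_exponent_le (by linarith) (by linarith)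
        _ = 4 * KX := Real.rpow_one _
    calc ‖L u - L v‖ ≤ 2 := htriv
      _ = 2 * m ^ (-(1-s)) * m ^ (1-s) := h2
      _ ≤ 2 * m ^ (-(1-s)) * ((4*KX) ^ (1-s) * c ^ (1-s)) := by gcongr
      _ ≤ 2 * m ^ (-(1-s)) * (4 * KX * c ^ (1-s)) := by gcongr
      _ = 8 * KX * m ^ (-(1-s)) * c ^ (1-s) := by ring
  · -- small distance case: use Lipschitz bound
    rcases eq_or_lt_of_le hc0 with hc | hc
    · have : ‖L u - L v‖ ≤ 0 := by
        rw [← hc] at hlip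
        calc ‖L u - L v‖ ≤ 2 * KX * 0 / m := hlip
          _ = 0 := by ring
      have hL0 : ‖L u - L v‖ = 0 := le_antisymm this (norm_nonneg _)
      rw [hL0]
      positivity
    · have hcm : c ≤ m := by nlinarith
      have hcs : c ^ s ≤ m ^ s := Real.rpow_le_rpow hc0 hcm hs.le
      have hsplit : c = c ^ s * c ^ (1-s) := by
        rw [← Real.rpow_add hc]
        norm_num
      have key : 2 * KX * c / m ≤ 8 * KX * m ^ (-(1-s)) * c ^ (1-s) := by
        have hms : m ^ ((-(1-s)) : ℝ) = m ^ s / m := by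
          rw [show -(1-s) = s - 1 by ring, Real.rpow_sub hm, Real.rpow_one]
        have hcle : c ≤ m ^ s * c ^ (1-s) := by
          calc c = c ^ s * c ^ (1-s) := hsplit
            _ ≤ m ^ s * c ^ (1-s) := mul_le_mul_of_nonneg_right hcs hrc
        rw [hms]
        calc 2 * KX * c / m ≤ 2 * KX * (m ^ s * c ^ (1-s)) / m := by gcongr
          _ = 2 * KX * (m ^ s / m) * c ^ (1-s) := by ring
          _ ≤ 8 * KX * (m ^ s / m) * c ^ (1-s) := by
              have h0 : 0 ≤ KX * (m ^ s / m) * c ^ (1-s) := by positivity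
              nlinarith
      exact le_trans hlip key
end

section
/- Let $\beta > 0$, $0 < \gamma \leq \alpha$, and let $(a_{j})_{j \geq 0}$, $(b_j)_{j\geq 0}$ be sequences of nonnegative reals with $b_j \leq C 2^{-j\beta}(1+j)^{-2}$ for all $j$. Set $S_\gamma = \sum_j 2^{-j\gamma} a_j b_j$ and $S_\alpha = \sum_j 2^{-j\alpha} a_j b_j$ (assumed finite), with $a_j \leq 1$. Then $S_\gamma \leq C' S_\alpha^{\frac{\beta+\gamma}{\beta+\alpha}}$, where $C'$ depends only on $C, \beta, \gamma, \alpha$. -/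
open MeasureTheory ENNReal

lemma holder_tsum_aux {θ : ℝ} (h0 : 0 < θ) (h1 : θ ≤ 1) (f g : ℕ → ℝ≥0∞) :
    ∑' j, f j ^ θ * g j ^ (1 - θ) ≤ (∑' j, f j) ^ θ * (∑' j, g j) ^ (1 - θ) := by
  rcases eq_or_lt_of_le h1 with rfl | h1
  · simp
  · have hθ1 : (0:ℝ) < 1 - θ := by linarith
    have hpq : Real.HolderConjugate (1/θ) (1/(1-θ)) :=
      Real.holderConjugate_one_div h0 hθ1 (by ring)
    have H := ENNReal.lintegral_mul_le_Lp_mul_Lq (Measure.count (α := ℕ))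
      hpq (f := fun j => f j ^ θ) (g := fun j => g j ^ (1-θ))
      (measurable_of_countable _).aemeasurable (measurable_of_countable _).aemeasurable
    simp only [Pi.mul_apply, MeasureTheory.lintegral_count] at H
    have e1 : ∀ j, (f j ^ θ) ^ θ⁻¹ = f j := fun j => by
      rw [← ENNReal.rpow_mul, mul_inv_cancel₀ h0.ne', ENNReal.rpow_one]
    have e2 : ∀ j, (g j ^ (1-θ)) ^ (1-θ)⁻¹ = g j := fun j => by
      rw [← ENNReal.rpow_mul, mul_inv_cancel₀ hθ1.ne', ENNReal.rpow_one]
    simpa [e1, e2, one_div_one_div] using H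

/-- Sequence-space core of the interpolation of Besov IPMs: if `0 ≤ a j ≤ 1` and
`0 ≤ b j ≤ C 2^{-jβ}(1+j)^{-2}`, then
`∑ 2^{-jγ} a_j b_j ≤ C' (∑ 2^{-jα} a_j b_j)^{(β+γ)/(β+α)}`
for a constant `C'` depending only on `C, β, γ, α`. -/
theorem stmt_11 (C β γ α : ℝ) (hC : 0 < C) (hβ : 0 < β) (hγ : 0 < γ) (hγα : γ ≤ α) :
    ∃ C' : ℝ, 0 < C' ∧ ∀ a b : ℕ → ℝ,
      (∀ j, 0 ≤ a j) → (∀ j, a j ≤ 1) → (∀ j, 0 ≤ b j) →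
      (∀ j, b j ≤ C * 2 ^ (-(j:ℝ) * β) * ((1 + (j:ℝ)) ^ 2)⁻¹) →
      Summable (fun j : ℕ => (2:ℝ) ^ (-(j:ℝ) * γ) * a j * b j) →
      Summable (fun j : ℕ => (2:ℝ) ^ (-(j:ℝ) * α) * a j * b j) →
      ∑' j : ℕ, (2:ℝ) ^ (-(j:ℝ) * γ) * a j * b j ≤
        C' * (∑' j : ℕ, (2:ℝ) ^ (-(j:ℝ) * α) * a j * b j) ^ ((β + γ) / (β + α)) := by
  set θ : ℝ := (β + γ) / (β + α) with hθdef
  have hβα : (0:ℝ) < β + α := by linarith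
  have hθ0 : 0 < θ := div_pos (by linarith) hβα
  have hθ1 : θ ≤ 1 := by
    rw [div_le_one hβα]; linarith
  have h1θ : 0 ≤ 1 - θ := by linarith
  -- the weight sequence
  have hKsum : Summable (fun j : ℕ => C * ((1 + (j:ℝ)) ^ 2)⁻¹) := by
    apply Summable.mul_left
    have h2 : Summable (fun n : ℕ => ((n:ℝ) ^ 2)⁻¹) := by
      simpa using Real.summable_one_div_nat_pow.2 (le_refl 2)
    have := (summable_nat_add_iff 1).2 h2
    apply this.congr
    intro j
    push_cast
    ring_nf
  set K : ℝ := ∑' j : ℕ, C * ((1 + (j:ℝ)) ^ 2)⁻¹ with hKdef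
  have hKpos : 0 < K := by
    have h0 : C * ((1 + ((0:ℕ):ℝ)) ^ 2)⁻¹ ≤ K := by
      apply Summable.le_tsum hKsum
      intro j _
      positivity
    simp at h0
    linarith
  refine ⟨K ^ (1 - θ), Real.rpow_pos_of_pos hKpos _, ?_⟩
  intro a b ha0 ha1 hb0 hbC hsγ hsα
  -- nonnegativity of terms
  have htγ : ∀ j : ℕ, 0 ≤ (2:ℝ) ^ (-(j:ℝ) * γ) * a j * b j := fun j =>
    mul_nonneg (mul_nonneg (Real.rpow_nonneg (by norm_num) _) (ha0 j)) (hb0 j)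
  have htα : ∀ j : ℕ, 0 ≤ (2:ℝ) ^ (-(j:ℝ) * α) * a j * b j := fun j =>
    mul_nonneg (mul_nonneg (Real.rpow_nonneg (by norm_num) _) (ha0 j)) (hb0 j)
  -- key pointwise inequality in ℝ
  have hpoint : ∀ j : ℕ, (2:ℝ) ^ (-(j:ℝ) * γ) * a j * b j ≤
      ((2:ℝ) ^ (-(j:ℝ) * α) * a j * b j) ^ θ * (C * ((1 + (j:ℝ)) ^ 2)⁻¹) ^ (1 - θ) := by
    intro j
    set t : ℝ := a j * b j with htdef
    have ht0 : 0 ≤ t := mul_nonneg (ha0 j) (hb0 j)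
    have hid : (2:ℝ) ^ (-(j:ℝ) * γ) * a j * b j =
        ((2:ℝ) ^ (-(j:ℝ) * α) * a j * b j) ^ θ * ((2:ℝ) ^ ((j:ℝ) * β) * a j * b j) ^ (1 - θ) := by
      have h2 : (0:ℝ) ≤ 2 := by norm_num
      rw [mul_assoc, mul_assoc, mul_assoc, ← htdef]
      rw [Real.mul_rpow (Real.rpow_nonneg h2 _) ht0,
          Real.mul_rpow (Real.rpow_nonneg h2 _) ht0]
      rw [← Real.rpow_mul h2, ← Real.rpow_mul h2]
      have hexp : (2:ℝ) ^ (-(j:ℝ) * α * θ) * t ^ θ * ((2:ℝ) ^ ((j:ℝ) * β * (1 - θ)) * t ^ (1 - θ))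
          = (2:ℝ) ^ (-(j:ℝ) * α * θ + (j:ℝ) * β * (1 - θ)) * (t ^ θ * t ^ (1 - θ)) := by
        rw [Real.rpow_add (by norm_num : (0:ℝ) < 2)]
        ring
      rw [hexp]
      have htt : t ^ θ * t ^ (1 - θ) = t := by
        rw [← Real.rpow_add' ht0 (by norm_num)]
        simp
      rw [htt]
      congr 2
      have hcancel : θ * (β + α) = β + γ := by
        rw [hθdef, div_mul_cancel₀]
        exact hβα.ne'
      linear_combination (j:ℝ) * hcancel
    rw [hid]
    apply mul_le_mul_of_nonneg_left _ (Real.rpow_nonneg (htα j) θ)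
    apply Real.rpow_le_rpow
      (mul_nonneg (mul_nonneg (Real.rpow_nonneg (by norm_num) _) (ha0 j)) (hb0 j)) _ h1θ
    calc (2:ℝ) ^ ((j:ℝ) * β) * a j * b j
        ≤ (2:ℝ) ^ ((j:ℝ) * β) * 1 * (C * 2 ^ (-(j:ℝ) * β) * ((1 + (j:ℝ)) ^ 2)⁻¹) := by
          apply mul_le_mul
          · exact mul_le_mul_of_nonneg_left (ha1 j) (by positivity)
          · exact hbC j
          · exact hb0 j
          · positivity
      _ = (2:ℝ) ^ ((j:ℝ) * β) * (2:ℝ) ^ (-(j:ℝ) * β) * (C * ((1 + (j:ℝ)) ^ 2)⁻¹) := by ring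
      _ = C * ((1 + (j:ℝ)) ^ 2)⁻¹ := by
          rw [← Real.rpow_add (by norm_num : (0:ℝ) < 2)]
          simp
  -- move to ℝ≥0∞
  set f : ℕ → ℝ≥0∞ := fun j => ENNReal.ofReal ((2:ℝ) ^ (-(j:ℝ) * α) * a j * b j) with hfdef
  set g : ℕ → ℝ≥0∞ := fun j => ENNReal.ofReal (C * ((1 + (j:ℝ)) ^ 2)⁻¹) with hgdef
  have hsum1 : ENNReal.ofReal (∑' j : ℕ, (2:ℝ) ^ (-(j:ℝ) * γ) * a j * b j) ≤
      (∑' j, f j) ^ θ * (∑' j, g j) ^ (1 - θ) := by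
    rw [ENNReal.ofReal_tsum_of_nonneg htγ hsγ]
    refine le_trans (ENNReal.tsum_le_tsum fun j => ?_) (holder_tsum_aux hθ0 hθ1 f g)
    rw [hfdef, hgdef]
    simp only
    rw [ENNReal.ofReal_rpow_of_nonneg (htα j) hθ0.le,
        ENNReal.ofReal_rpow_of_nonneg (by positivity) h1θ,
        ← ENNReal.ofReal_mul (Real.rpow_nonneg (htα j) θ)]
    exact ENNReal.ofReal_le_ofReal (hpoint j)
  have hf : (∑' j, f j) = ENNReal.ofReal (∑' j : ℕ, (2:ℝ) ^ (-(j:ℝ) * α) * a j * b j) :=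
    (ENNReal.ofReal_tsum_of_nonneg htα hsα).symm
  have hg : (∑' j, g j) = ENNReal.ofReal K :=
    (ENNReal.ofReal_tsum_of_nonneg (fun j => by positivity) hKsum).symm
  rw [hf, hg] at hsum1
  have hne : (ENNReal.ofReal (∑' j : ℕ, (2:ℝ) ^ (-(j:ℝ) * α) * a j * b j)) ^ θ *
      (ENNReal.ofReal K) ^ (1 - θ) ≠ ⊤ :=
    ENNReal.mul_ne_top (ENNReal.rpow_ne_top_of_nonneg hθ0.le ENNReal.ofReal_ne_top)
      (ENNReal.rpow_ne_top_of_nonneg h1θ ENNReal.ofReal_ne_top)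
  have := ENNReal.toReal_mono hne hsum1
  rw [ENNReal.toReal_ofReal (tsum_nonneg htγ)] at this
  refine le_trans this (le_of_eq ?_)
  rw [ENNReal.toReal_mul, ← ENNReal.toReal_rpow, ← ENNReal.toReal_rpow,
      ENNReal.toReal_ofReal (tsum_nonneg htα), ENNReal.toReal_ofReal hKpos.le]
  ring
end

section
/- Let $\mu$ be a probability measure on a $d$-dimensional compact submanifold $\mathcal{M} \subset \mathbb{R}^p$ with density $f_\mu \geq K^{-1}$ with respect to the volume (d-dimensional Hausdorff) measure, and suppose for every $x \in \mathcal{M}$ and $s \in (0, s_0)$ the volume lower bound $\lambda_{\mathcal{M}}(\mathcal{M}\cap B^p(x,s)) \geq c s^d$ holds. Let $\mu^\star$ be another probability measure with support $\mathcal{M}^\star$ and suppose $W_1(\mu,\mu^\star) \leq \frac{c}{2K} \delta^{d+1}$ for some $\delta \in (0, s_0)$. Then every point $x \in \mathcal{M}$ satisfies $d(x, \mathcal{M}^\star) < \delta$, i.e. $\sup_{x \in \mathcal{M}} d(x, \mathcal{M}^\star) < \delta$. -/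
open MeasureTheory
open scoped ENNReal

/-- If `μ` has density `≥ K⁻¹` with respect to the `d`-dimensional Hausdorff (volume)
measure on `M`, which satisfies the volume lower bound `λ_M(M ∩ B(x,s)) ≥ c s^d`, and
`W₁(μ, μ⋆) ≤ c/(2^{d+1} K) δ^{d+1}` (expressed through Kantorovich duality), then every
point of `M` is within distance `δ` of the support `M⋆` of `μ⋆`. -/
theorem stmt_19 (p d : ℕ) (K c s₀ δ : ℝ) (hK : 0 < K) (hc : 0 < c) (hs₀ : 0 < s₀)
    (hδ : 0 < δ) (hδs : δ < s₀)
    (M Mstar : Set (EuclideanSpace ℝ (Fin p))) (hM : IsCompact M)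
    (μ μstar : Measure (EuclideanSpace ℝ (Fin p)))
    [IsProbabilityMeasure μ] [IsProbabilityMeasure μstar]
    (f : EuclideanSpace ℝ (Fin p) → ℝ≥0∞)
    (hμ : μ = ((Measure.hausdorffMeasure (d : ℝ)).restrict M).withDensity f)
    (hf : ∀ x ∈ M, ENNReal.ofReal K⁻¹ ≤ f x)
    (hvol : ∀ x ∈ M, ∀ s : ℝ, 0 < s → s < s₀ →
      ENNReal.ofReal (c * s ^ d) ≤
        Measure.hausdorffMeasure (d : ℝ) (M ∩ Metric.ball x s))
    (hμstar : μstar Mstarᶜ = 0)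
    (hW : ∀ D : EuclideanSpace ℝ (Fin p) → ℝ, LipschitzWith 1 D →
      ∫ x, D x ∂μ - ∫ x, D x ∂μstar ≤ c / (2 ^ (d + 1) * K) * δ ^ (d + 1)) :
    ∀ x ∈ M, Metric.infDist x Mstar < δ := by
  intro x hx
  by_contra hcon
  push_neg at hcon
  set D : EuclideanSpace ℝ (Fin p) → ℝ := fun y => max (δ - dist y x) 0 with hDdef
  have hLip : LipschitzWith 1 D := by
    have h1 : LipschitzWith 1 (fun y : EuclideanSpace ℝ (Fin p) => δ - dist y x) := by
      have h2 : LipschitzWith 1 (fun y : EuclideanSpace ℝ (Fin p) => dist y x) :=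
        LipschitzWith.dist_left x
      simpa using (LipschitzWith.const δ).sub h2
    simpa [hDdef] using h1.max_const 0
  have hDnonneg : ∀ y, 0 ≤ D y := fun y => le_max_right _ _
  -- D vanishes on Mstar
  have hD0 : ∀ y ∈ Mstar, D y = 0 := by
    intro y hy
    have : δ ≤ dist y x := by
      calc δ ≤ Metric.infDist x Mstar := hcon
        _ ≤ dist x y := Metric.infDist_le_dist_of_mem hy
        _ = dist y x := dist_comm x y
    simp [hDdef, max_eq_right, sub_nonpos.mpr this]
  -- compact support & integrability
  have hsupp : HasCompactSupport D := by
    apply HasCompactSupport.intro (isCompact_closedBall x δ)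
    intro y hy
    have : δ ≤ dist y x := le_of_not_gt fun h => hy (Metric.mem_closedBall.mpr (le_of_lt (by rwa [dist_comm] at h ⊢)))
    simp [hDdef, max_eq_right, sub_nonpos.mpr this]
  have hInt : Integrable D μ := hLip.continuous.integrable_of_hasCompactSupport hsupp
  have hIntStar : Integrable D μstar := hLip.continuous.integrable_of_hasCompactSupport hsupp
  -- ∫ D dμstar = 0
  have hstar0 : ∫ y, D y ∂μstar = 0 := by
    apply integral_eq_zero_of_ae
    rw [Filter.EventuallyEq, ae_iff]
    simp only [Pi.zero_apply]
    exact measure_mono_null (fun y hy hmem => hy (hD0 y hmem)) hμstar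
  -- the ball
  set B : Set (EuclideanSpace ℝ (Fin p)) := Metric.ball x (δ / 2) with hBdef
  have hBmeas : MeasurableSet B := Metric.isOpen_ball.measurableSet
  have hMmeas : MeasurableSet M := hM.isClosed.measurableSet
  have hδ2 : 0 < δ / 2 := by linarith
  -- lower bound on μ B
  have hμB : ENNReal.ofReal (K⁻¹ * (c * (δ / 2) ^ d)) ≤ μ B := by
    have hrw : μ B = ∫⁻ y in B ∩ M, f y ∂(Measure.hausdorffMeasure (d : ℝ)) := by
      rw [hμ, withDensity_apply _ hBmeas, Measure.restrict_restrict hBmeas]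
    rw [hrw]
    calc ENNReal.ofReal (K⁻¹ * (c * (δ / 2) ^ d))
        = ENNReal.ofReal K⁻¹ * ENNReal.ofReal (c * (δ / 2) ^ d) := by
          rw [ENNReal.ofReal_mul (by positivity)]
      _ ≤ ENNReal.ofReal K⁻¹ * Measure.hausdorffMeasure (d : ℝ) (B ∩ M) := by
          gcongr
          rw [Set.inter_comm]
          exact hvol x hx (δ / 2) hδ2 (by linarith)
      _ = ∫⁻ _ in B ∩ M, ENNReal.ofReal K⁻¹ ∂(Measure.hausdorffMeasure (d : ℝ)) := by
          rw [setLIntegral_const, mul_comm]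
      _ ≤ ∫⁻ y in B ∩ M, f y ∂(Measure.hausdorffMeasure (d : ℝ)) := by
          apply setLIntegral_mono' (hBmeas.inter hMmeas)
          exact fun y hy => hf y hy.2
  have hμBr : K⁻¹ * (c * (δ / 2) ^ d) ≤ (μ B).toReal :=
    (ENNReal.ofReal_le_iff_le_toReal (measure_ne_top μ B)).mp hμB
  have hμBpos : 0 < (μ B).toReal := lt_of_lt_of_le (by positivity) hμBr
  -- strict positivity of ∫_B (D - δ/2)
  have hDB : ∀ y ∈ B, 0 < D y - δ / 2 := by
    intro y hy
    have hyd : dist y x < δ / 2 := Metric.mem_ball.mp hy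
    have : δ / 2 < δ - dist y x := by linarith
    have hDy : D y = δ - dist y x := max_eq_left (by linarith)
    linarith [hDy ▸ this]
  have hIntB : IntegrableOn (fun y => D y - δ / 2) B μ :=
    (hInt.sub (integrable_const _)).integrableOn
  have hpos : 0 < ∫ y in B, (D y - δ / 2) ∂μ := by
    rw [setIntegral_pos_iff_support_of_nonneg_ae]
    · apply lt_of_lt_of_le _ (measure_mono (Set.subset_inter (fun y hy => ne_of_gt (hDB y hy)) (le_refl B)))
      exact lt_of_lt_of_le (ENNReal.ofReal_pos.mpr (by positivity)) hμB
    · exact ae_restrict_of_forall_mem hBmeas fun y hy => (hDB y hy).le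
    · exact hIntB
  have hsplit : ∫ y in B, D y ∂μ = (∫ y in B, (D y - δ / 2) ∂μ) + (δ / 2) * (μ B).toReal := by
    rw [integral_sub hInt.integrableOn ((integrableOn_const_iff).mpr (Or.inr (measure_lt_top μ B)))]
    rw [setIntegral_const]
    ring_nf
    simp [smul_eq_mul, measureReal_def]
    ring
  have hle : ∫ y in B, D y ∂μ ≤ ∫ y, D y ∂μ :=
    setIntegral_le_integral hInt (Filter.Eventually.of_forall hDnonneg)
  -- final contradiction
  have hkey : c / (2 ^ (d + 1) * K) * δ ^ (d + 1) < ∫ y, D y ∂μ := by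
    have h1 : c / (2 ^ (d + 1) * K) * δ ^ (d + 1) = (δ / 2) * (K⁻¹ * (c * (δ / 2) ^ d)) := by
      rw [div_pow]
      field_simp
      ring
    calc c / (2 ^ (d + 1) * K) * δ ^ (d + 1)
        = (δ / 2) * (K⁻¹ * (c * (δ / 2) ^ d)) := h1
      _ ≤ (δ / 2) * (μ B).toReal := by gcongr
      _ < (∫ y in B, (D y - δ / 2) ∂μ) + (δ / 2) * (μ B).toReal := by linarith
      _ = ∫ y in B, D y ∂μ := hsplit.symm
      _ ≤ ∫ y, D y ∂μ := hle
  have := hW D hLip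
  rw [hstar0] at this
  linarith
end
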